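/- Let G = ⋃ᵢ Gᵢ be the union of a strictly increasing chain of subgroups G₁ ≤ G₂ ≤ ⋯ with each index |Gᵢ₊₁ : Gᵢ| finite (indexing so Gᵢ ⊆ Gᵢ₊₁). Then the coset graph T—with vertices the cosets gGᵢ for all g ∈ G and i, and edges between gGᵢ and hGⱼ when |i−j| = 1 and one coset contains the other—is a connected, locally finite graph, and the natural left G-action on T is fixed-point free on vertices. -/

import Mathlib

open Pointwise

/-- Vertices of the coset graph: pairs `(i, C)` where `C = gGᵢ` is a left coset of `Gᵢ`. -/
def CosetVertex (G : Type*) [Group G] (Gc : ℕ → Subgroup G) :=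
  {p : ℕ × Set G // ∃ g : G, p.2 = g • (Gc p.1 : Set G)}

/-- The coset graph of a chain of subgroups: `gGᵢ` and `hGⱼ` are adjacent iff `|i - j| = 1`
and one coset contains the other. -/
def cosetGraph (G : Type*) [Group G] (Gc : ℕ → Subgroup G) :
    SimpleGraph (CosetVertex G Gc) where
  Adj x y := (x.1.1 = y.1.1 + 1 ∨ y.1.1 = x.1.1 + 1) ∧ (x.1.2 ⊆ y.1.2 ∨ y.1.2 ⊆ x.1.2)
  symm := by
    constructor
    rintro x y ⟨h1, h2⟩
    exact ⟨h1.symm, h2.symm⟩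
  loopless := by
    constructor
    rintro x ⟨h1, -⟩
    rcases h1 with h | h <;> omega

/-- Standard vertex: the coset `g • Gc i` at level `i`. -/
def vert {G : Type*} [Group G] (Gc : ℕ → Subgroup G) (i : ℕ) (g : G) :
    CosetVertex G Gc :=
  ⟨(i, g • (Gc i : Set G)), g, rfl⟩

lemma vert_eq_of_coset_eq {G : Type*} [Group G] (Gc : ℕ → Subgroup G) (i : ℕ) {g h : G}
    (hgh : g⁻¹ * h ∈ Gc i) : vert Gc i g = vert Gc i h := by
  have : g • (Gc i : Set G) = h • (Gc i : Set G) := (leftCoset_eq_iff _).2 hgh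
  exact Subtype.ext (Prod.ext rfl this)

lemma adj_up {G : Type*} [Group G] (Gc : ℕ → Subgroup G)
    (hmono : ∀ i, Gc i < Gc (i + 1)) (i : ℕ) (g : G) :
    (cosetGraph G Gc).Adj (vert Gc i g) (vert Gc (i + 1) g) := by
  refine ⟨Or.inr rfl, Or.inl ?_⟩
  exact Set.smul_set_mono (le_of_lt (hmono i))

lemma reach_up {G : Type*} [Group G] (Gc : ℕ → Subgroup G)
    (hmono : ∀ i, Gc i < Gc (i + 1)) (i : ℕ) (g : G) :
    ∀ n, i ≤ n → (cosetGraph G Gc).Reachable (vert Gc i g) (vert Gc n g) := by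
  intro n hn
  induction n with
  | zero =>
    have : i = 0 := Nat.le_zero.mp hn
    subst this; exact SimpleGraph.Reachable.refl _
  | succ m ih =>
    rcases Nat.lt_or_ge i (m + 1) with h | h
    · exact (ih (Nat.lt_succ_iff.mp h)).trans (adj_up Gc hmono m g).reachable
    · have : i = m + 1 := le_antisymm hn h
      subst this; exact SimpleGraph.Reachable.refl _

theorem cosetGraph_connected_locallyFinite_fixedPointFree
    (G : Type*) [Group G] (Gc : ℕ → Subgroup G)
    (hmono : ∀ i, Gc i < Gc (i + 1))
    (hunion : ∀ g : G, ∃ i, g ∈ Gc i)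
    (hindex : ∀ i, (Gc i).relIndex (Gc (i + 1)) ≠ 0) :
    (cosetGraph G Gc).Preconnected ∧
    (∀ v : CosetVertex G Gc, ((cosetGraph G Gc).neighborSet v).Finite) ∧
    (∀ v : CosetVertex G Gc, ∃ x : G, x • v.1.2 ≠ v.1.2) := by
  have hGmono : Monotone Gc := (strictMono_nat_of_lt_succ hmono).monotone
  have hvert : ∀ v : CosetVertex G Gc, ∃ i g, v = vert Gc i g := by
    rintro ⟨⟨i, C⟩, g, hg⟩
    exact ⟨i, g, Subtype.ext (Prod.ext rfl hg)⟩
  refine ⟨?_, ?_, ?_⟩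
  · -- Preconnected
    intro v w
    obtain ⟨i, g, rfl⟩ := hvert v
    obtain ⟨j, h, rfl⟩ := hvert w
    obtain ⟨k, hk⟩ := hunion (g⁻¹ * h)
    set N := max (max i j) k with hN
    have h1 : (cosetGraph G Gc).Reachable (vert Gc i g) (vert Gc N g) :=
      reach_up Gc hmono i g N (le_trans (le_max_left i j) (le_max_left _ _))
    have h2 : (cosetGraph G Gc).Reachable (vert Gc j h) (vert Gc N h) :=
      reach_up Gc hmono j h N (le_trans (le_max_right i j) (le_max_left _ _))
    have heq : vert Gc N g = vert Gc N h :=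
      vert_eq_of_coset_eq Gc N (hGmono (le_max_right _ k) hk)
    rw [heq] at h1
    exact h1.trans h2.symm
  · -- Locally finite
    intro v
    obtain ⟨i, g, rfl⟩ := hvert v
    rcases i with _ | j
    · -- level 0 : only upward neighbors, all equal to `vert Gc 1 g`
      apply Set.Finite.subset (Set.finite_singleton (vert Gc 1 g))
      intro w hw
      obtain ⟨m, h, rfl⟩ := hvert w
      obtain ⟨h1, h2⟩ := hw
      simp only [vert] at h1 h2 ⊢
      have hm : m = 1 := by
        rcases h1 with h1 | h1 <;> omega
      subst hm
      -- show the coset equals g • Gc 1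
      have hC : h • (Gc 1 : Set G) = g • (Gc 1 : Set G) := by
        rcases h2 with h2 | h2
        · -- g • Gc 0 ⊆ h • Gc 1, so g ∈ h • Gc 1
          have hg : g ∈ h • (Gc 1 : Set G) := h2 ⟨1, (Gc 0).one_mem, by simp⟩
          exact (leftCoset_eq_iff _).2 ((mem_leftCoset_iff h).mp hg)
        · -- h • Gc 1 ⊆ g • Gc 0 : impossible
          exfalso
          have hh : h ∈ g • (Gc 0 : Set G) := h2 ⟨1, (Gc 1).one_mem, by simp⟩
          have hcoset : g • (Gc 0 : Set G) = h • (Gc 0 : Set G) :=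
            (leftCoset_eq_iff _).2 ((mem_leftCoset_iff g).mp hh)
          rw [hcoset] at h2
          have hle : (Gc 1 : Set G) ⊆ (Gc 0 : Set G) := by
            intro x hx
            have := h2 ⟨x, hx, rfl⟩
            simpa [Set.mem_smul_set_iff_inv_smul_mem] using this
          exact absurd hle (not_le_of_gt (hmono 0))
      exact Subtype.ext (Prod.ext rfl hC)
    · -- level j+1
      have hQfin : Finite (Gc (j + 1) ⧸ (Gc j).subgroupOf (Gc (j + 1))) :=
        Nat.finite_of_card_ne_zero (hindex j)
      set Q := Gc (j + 1) ⧸ (Gc j).subgroupOf (Gc (j + 1)) with hQ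
      have hsub : ((cosetGraph G Gc).neighborSet (vert Gc (j + 1) g)) ⊆
          insert (vert Gc (j + 2) g)
            (Set.range (fun q : Q => vert Gc j (g * (Quotient.out q : Gc (j + 1)).1))) := by
        intro w hw
        obtain ⟨m, h, rfl⟩ := hvert w
        obtain ⟨h1, h2⟩ := hw
        simp only [vert] at h1 h2
        rcases h1 with h1 | h1
        · -- j + 1 = m + 1, i.e. m = j : downward neighbor
          have hm : j = m := by omega
          subst hm
          right
          have hcont : h ∈ g • (Gc (j + 1) : Set G) := by
            rcases h2 with h2 | h2
            · exfalso
              have hg : g ∈ h • (Gc j : Set G) := h2 ⟨1, (Gc (j + 1)).one_mem, by simp⟩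
              have hcoset : h • (Gc j : Set G) = g • (Gc j : Set G) :=
                (leftCoset_eq_iff _).2 ((mem_leftCoset_iff h).mp hg)
              rw [hcoset] at h2
              have hle : (Gc (j + 1) : Set G) ⊆ (Gc j : Set G) := by
                intro z hz
                have := h2 ⟨z, hz, rfl⟩
                simpa [Set.mem_smul_set_iff_inv_smul_mem] using this
              exact absurd hle (not_le_of_gt (hmono j))
            · exact h2 ⟨1, (Gc j).one_mem, by simp⟩
          have hx : g⁻¹ * h ∈ Gc (j + 1) := (mem_leftCoset_iff g).mp hcont
          set x : Gc (j + 1) := ⟨g⁻¹ * h, hx⟩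
          refine ⟨QuotientGroup.mk x, ?_⟩
          have hout : (QuotientGroup.mk (Quotient.out (QuotientGroup.mk x : Q)) : Q)
              = QuotientGroup.mk x := Quotient.out_eq _
          have hrel : (Quotient.out (QuotientGroup.mk x : Q))⁻¹ * x ∈
              (Gc j).subgroupOf (Gc (j + 1)) := (QuotientGroup.eq).mp hout
          have hrel' : ((Quotient.out (QuotientGroup.mk x : Q))⁻¹ * x : Gc (j + 1)).1 ∈ Gc j :=
            hrel
          have hC : (g * (Quotient.out (QuotientGroup.mk x : Q) : Gc (j + 1)).1) •
              (Gc j : Set G) = h • (Gc j : Set G) := by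
            apply (leftCoset_eq_iff _).2
            have heq : (g * (Quotient.out (QuotientGroup.mk x : Q) : Gc (j + 1)).1)⁻¹ * h
                = ((Quotient.out (QuotientGroup.mk x : Q))⁻¹ * x : Gc (j + 1)).1 := by
              simp [x, mul_assoc]
            rw [heq]
            exact hrel'
          exact Subtype.ext (Prod.ext rfl hC)
        · -- m = j + 2 : upward neighbor
          subst h1
          left
          have hC : h • (Gc (j + 1 + 1) : Set G) = g • (Gc (j + 1 + 1) : Set G) := by
            rcases h2 with h2 | h2
            · have hg : g ∈ h • (Gc (j + 1 + 1) : Set G) :=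
                h2 ⟨1, (Gc (j + 1)).one_mem, by simp⟩
              exact (leftCoset_eq_iff _).2 ((mem_leftCoset_iff h).mp hg)
            · exfalso
              have hh : h ∈ g • (Gc (j + 1) : Set G) :=
                h2 ⟨1, (Gc (j + 1 + 1)).one_mem, by simp⟩
              have hcoset : g • (Gc (j + 1) : Set G) = h • (Gc (j + 1) : Set G) :=
                (leftCoset_eq_iff _).2 ((mem_leftCoset_iff g).mp hh)
              rw [hcoset] at h2
              have hle : (Gc (j + 1 + 1) : Set G) ⊆ (Gc (j + 1) : Set G) := by
                intro z hz
                have := h2 ⟨z, hz, rfl⟩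
                simpa [Set.mem_smul_set_iff_inv_smul_mem] using this
              exact absurd hle (not_le_of_gt (hmono (j + 1)))
          exact Subtype.ext (Prod.ext rfl hC)
      exact Set.Finite.subset ((Set.finite_range _).insert _) hsub
  · -- Fixed-point free
    intro v
    obtain ⟨i, g, rfl⟩ := hvert v
    obtain ⟨y, hy1, hy0⟩ := SetLike.exists_of_lt (hmono i)
    refine ⟨g * y * g⁻¹, ?_⟩
    intro hcontra
    simp only [vert] at hcontra
    have : (g * y * g⁻¹) • (g • (Gc i : Set G)) = (g * y) • (Gc i : Set G) := by
      rw [smul_smul]; congr 1; group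
    rw [this] at hcontra
    have : (g * y)⁻¹ * g ∈ Gc i := (leftCoset_eq_iff _).1 hcontra
    have : y⁻¹ ∈ Gc i := by
      have h2 : (g * y)⁻¹ * g = y⁻¹ := by group
      rwa [h2] at this
    exact hy0 ((Gc i).inv_mem_iff.mp this)
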